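/- Let n ≥ 1, m = |n|, and let x_1,…,x_n ∈ {0,1}. Then there exists a unique vector (z_1,…,z_m) ∈ ℝ^m such that for every q = 0,1,…,m−1 the vector (x_1,…,x_n, 1^{(2^q)}, z_1^{(1)}, z_2^{(2)}, …, z_q^{(2^{q−1})}, 1−z_{q+1}) of length n+2^{q+1} lies in PP(n+2^{q+1}, q). Moreover, in this solution z_k ∈ {0,1} for all k, and Σ_{k=1}^n x_k = Σ_{k=1}^m (1−z_k)·2^{k−1}; that is, z_1,…,z_m are the flips of the bits of the binary representation of Σ_{k=1}^n x_k, from least to most significant. -/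

import Mathlib

/-- The truncated parity polytope `PP(n,q)`: the convex hull of the 0/1 vectors of
length `n` with `⌊2^{-q} Σ x_k⌋` odd. -/
def truncParityPolytope (n q : ℕ) : Set (Fin n → ℝ) :=
  convexHull ℝ
    {x : Fin n → ℝ |
      (∀ k, x k = 0 ∨ x k = 1) ∧ ∃ s : ℕ, (∑ k, x k) = (s : ℝ) ∧ Odd (s / 2 ^ q)}

/-- The vector `(x_1,…,x_n, 1^{(2^q)}, z_1^{(1)}, z_2^{(2)}, …, z_q^{(2^{q-1})},
1 - z_{q+1})` of length `n + 2^{q+1}`.  Here `z : ℕ → ℝ` is 0-indexed, so `z_k` is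
`z (k-1)`.  Positions `< n` hold the `x`'s, the next `2^q` positions hold `1`, the last
position holds `1 - z_{q+1}`, and a position with offset `p` into the `z`-region (so
`p ∈ {0,…,2^q-2}`) holds `z_k` where `k = Nat.size (p+1)` (i.e. `z_1` once, `z_2`
twice, …, `z_q` repeated `2^{q-1}` times). -/
noncomputable def bitGadget (n q : ℕ) (x : Fin n → ℝ) (z : ℕ → ℝ) :
    Fin (n + 2 ^ (q + 1)) → ℝ := fun j =>
  if h : (j : ℕ) < n then x ⟨j, h⟩
  else if (j : ℕ) < n + 2 ^ q then 1
  else if (j : ℕ) = n + 2 ^ (q + 1) - 1 then 1 - z q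
  else z (Nat.size ((j : ℕ) - (n + 2 ^ q) + 1) - 1)

open Finset

section Aux

lemma pp_box {N q : ℕ} {p : Fin N → ℝ} (hp : p ∈ truncParityPolytope N q) (j : Fin N) :
    0 ≤ p j ∧ p j ≤ 1 := by
  have hc : Convex ℝ {y : Fin N → ℝ | 0 ≤ y j ∧ y j ≤ 1} := by
    intro y1 h1 y2 h2 a b ha hb hab
    simp only [Set.mem_setOf_eq, Pi.add_apply, Pi.smul_apply, smul_eq_mul] at *
    constructor
    · nlinarith [h1.1, h2.1]
    · nlinarith [h1.2, h2.2]
  exact convexHull_min (fun u hu => by rcases hu.1 j with h | h <;> simp [h]) hc hp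

lemma pp_affine {N q : ℕ} {p : Fin N → ℝ} (hp : p ∈ truncParityPolytope N q)
    (c d : Fin N → ℝ)
    (H : ∀ u : Fin N → ℝ, (∀ k, u k = 0 ∨ u k = 1) →
      (∃ s : ℕ, (∑ k, u k) = (s : ℝ) ∧ Odd (s / 2 ^ q)) →
      1 ≤ ∑ j, (c j + d j * u j)) :
    1 ≤ ∑ j, (c j + d j * p j) := by
  have hc : Convex ℝ {y : Fin N → ℝ | 1 ≤ ∑ j, (c j + d j * y j)} := by
    intro y1 h1 y2 h2 a b ha hb hab
    simp only [Set.mem_setOf_eq] at *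
    have key : ∑ j, (c j + d j * (a • y1 + b • y2) j)
        = a * ∑ j, (c j + d j * y1 j) + b * ∑ j, (c j + d j * y2 j) := by
      rw [Finset.mul_sum, Finset.mul_sum, ← Finset.sum_add_distrib]
      refine Finset.sum_congr rfl fun j _ => ?_
      simp only [Pi.add_apply, Pi.smul_apply, smul_eq_mul]
      linear_combination (c j) * hab.symm
    rw [key]
    nlinarith [mul_le_mul_of_nonneg_left h1 ha, mul_le_mul_of_nonneg_left h2 hb]
  exact convexHull_min (fun u hu => H u hu.1 hu.2) hc hp

lemma sum_size_region (f : ℕ → ℝ) : ∀ q : ℕ,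
    ∑ p ∈ Finset.range (2 ^ q - 1), f (Nat.size (p + 1) - 1)
      = ∑ k ∈ Finset.range q, 2 ^ k * f k := by
  intro q
  induction q with
  | zero => simp
  | succ q ih =>
    have h1 : (2:ℕ) ^ (q+1) - 1 = (2 ^ q - 1) + 2 ^ q := by
      have := Nat.one_le_two_pow (n := q); rw [pow_succ]; omega
    rw [h1, Finset.sum_range_add, ih, Finset.sum_range_succ]
    congr 1
    have h3 : ∀ j ∈ Finset.range (2 ^ q), f (Nat.size (2 ^ q - 1 + j + 1) - 1) = f q := by
      intro j hj
      rw [Finset.mem_range] at hj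
      have h2 : 2 ^ q - 1 + j + 1 = 2 ^ q + j := by
        have := Nat.one_le_two_pow (n := q); omega
      rw [h2]
      have hub : Nat.size (2 ^ q + j) ≤ q + 1 := by
        rw [Nat.size_le, pow_succ]; omega
      have hlb : q < Nat.size (2 ^ q + j) := by
        rw [Nat.lt_size]; omega
      have h4 : Nat.size (2 ^ q + j) = q + 1 := by omega
      rw [h4]; simp
    rw [Finset.sum_congr rfl h3, Finset.sum_const, Finset.card_range]
    ring

lemma sum_testbit (s : ℕ) : ∀ q : ℕ,
    ∑ k ∈ Finset.range q, (2:ℝ) ^ k * (if s.testBit k then 1 else 0)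
      = ((s % 2 ^ q : ℕ) : ℝ) := by
  intro q
  induction q with
  | zero => simp [Nat.mod_one]
  | succ q ih =>
    rw [Finset.sum_range_succ, ih]
    have hmod : s % 2 ^ (q + 1) = s % 2 ^ q + 2 ^ q * (s / 2 ^ q % 2) := by
      rw [pow_succ]; exact Nat.mod_mul
    rw [hmod]
    have hbit : s.testBit q = decide (s / 2 ^ q % 2 = 1) := Nat.testBit_eq_decide_div_mod_eq
    have h2 : s / 2 ^ q % 2 = 0 ∨ s / 2 ^ q % 2 = 1 := by omega
    rcases h2 with h | h <;> simp [hbit, h]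

def gadgetNat (n q : ℕ) (x : Fin n → ℝ) (zf : ℕ → ℝ) (j : ℕ) : ℝ :=
  if h : j < n then x ⟨j, h⟩
  else if j < n + 2 ^ q then 1
  else if j = n + 2 ^ (q + 1) - 1 then 1 - zf q
  else zf (Nat.size (j - (n + 2 ^ q) + 1) - 1)

lemma bitGadget_eq (n q : ℕ) (x : Fin n → ℝ) (zf : ℕ → ℝ) (j : Fin (n + 2 ^ (q + 1))) :
    bitGadget n q x zf j = gadgetNat n q x zf (j : ℕ) := rfl

lemma gadget_sum (n q : ℕ) (x : Fin n → ℝ) (zf : ℕ → ℝ) :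
    ∑ j, bitGadget n q x zf j
      = (∑ k, x k) + 2 ^ q
        + (∑ p ∈ Finset.range (2 ^ q - 1), zf (Nat.size (p + 1) - 1)) + (1 - zf q) := by
  have hp1 : 1 ≤ 2 ^ q := Nat.one_le_two_pow
  have hps : 2 ^ (q + 1) = 2 ^ q + 2 ^ q := by rw [pow_succ]; omega
  have h0 : ∑ j, bitGadget n q x zf j
      = ∑ j ∈ Finset.range (n + 2 ^ (q + 1)), gadgetNat n q x zf j := by
    rw [← Fin.sum_univ_eq_sum_range (gadgetNat n q x zf) (n + 2 ^ (q + 1))]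
    exact Finset.sum_congr rfl fun j _ => bitGadget_eq n q x zf j
  rw [h0]
  have hN : n + 2 ^ (q + 1) = ((n + 2 ^ q) + (2 ^ q - 1)) + 1 := by omega
  rw [hN, Finset.sum_range_succ, Finset.sum_range_add, Finset.sum_range_add]
  have hlast : gadgetNat n q x zf ((n + 2 ^ q) + (2 ^ q - 1)) = 1 - zf q := by
    have c1 : ¬ ((n + 2 ^ q) + (2 ^ q - 1) < n) := by omega
    have c2 : ¬ ((n + 2 ^ q) + (2 ^ q - 1) < n + 2 ^ q) := by omega
    have c3 : (n + 2 ^ q) + (2 ^ q - 1) = n + 2 ^ (q + 1) - 1 := by omega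
    have c1' : ¬ (n + 2 ^ (q + 1) - 1 < n) := by omega
    have c2' : ¬ (n + 2 ^ (q + 1) - 1 < n + 2 ^ q) := by omega
    simp [gadgetNat, c3, c1', c2']
  have hx' : ∑ j ∈ Finset.range n, gadgetNat n q x zf j = ∑ k, x k := by
    rw [← Fin.sum_univ_eq_sum_range (gadgetNat n q x zf) n]
    refine Finset.sum_congr rfl fun k _ => ?_
    simp [gadgetNat, k.isLt]
  have hone : ∑ j ∈ Finset.range (2 ^ q), gadgetNat n q x zf (n + j) = 2 ^ q := by
    have h5 : ∀ j ∈ Finset.range (2 ^ q), gadgetNat n q x zf (n + j) = 1 := by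
      intro j hj
      rw [Finset.mem_range] at hj
      have c1 : ¬ (n + j < n) := by omega
      have c2 : n + j < n + 2 ^ q := by omega
      simp [gadgetNat, c1, c2]
    rw [Finset.sum_congr rfl h5, Finset.sum_const, Finset.card_range]; simp
  have hz : ∑ j ∈ Finset.range (2 ^ q - 1), gadgetNat n q x zf ((n + 2 ^ q) + j)
      = ∑ p ∈ Finset.range (2 ^ q - 1), zf (Nat.size (p + 1) - 1) := by
    refine Finset.sum_congr rfl fun p hp => ?_
    rw [Finset.mem_range] at hp
    have c1 : ¬ ((n + 2 ^ q) + p < n) := by omega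
    have c2 : ¬ ((n + 2 ^ q) + p < n + 2 ^ q) := by omega
    have c3 : ¬ ((n + 2 ^ q) + p = n + 2 ^ (q + 1) - 1) := by omega
    have c4 : (n + 2 ^ q) + p - (n + 2 ^ q) = p := by omega
    simp [gadgetNat, c1, c2, c3, c4]
  rw [hlast, hx', hone, hz]

lemma geo_sum (q : ℕ) : ∑ k ∈ Finset.range q, (2:ℝ) ^ k = 2 ^ q - 1 := by
  rw [geom_sum_eq (by norm_num : (2:ℝ) ≠ 1)]
  norm_num

lemma div_R (q t : ℕ) : ((2 ^ q - 1) + 2 ^ q * t) / 2 ^ q = t := by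
  rw [Nat.add_mul_div_left _ _ (Nat.pos_of_ne_zero (by positivity))]
  rw [Nat.div_eq_of_lt (Nat.sub_lt (by positivity) one_pos)]
  omega

end Aux

/-- Let `n ≥ 1`, `m = |n|` (the number of bits of `n`) and let
`x_1,…,x_n ∈ {0,1}`.  Then there is a unique `(z_1,…,z_m) ∈ ℝ^m` such that for every
`q = 0,…,m-1` the vector `(x, 1^{(2^q)}, z_1^{(1)},…,z_q^{(2^{q-1})}, 1-z_{q+1})` lies
in `PP(n+2^{q+1}, q)`; moreover in this solution each `z_k ∈ {0,1}` and
`Σ_k x_k = Σ_{k=1}^m (1 - z_k)·2^{k-1}`. -/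
theorem statement6 (n : ℕ) (hn : 1 ≤ n) (x : Fin n → ℝ) (hx : ∀ k, x k = 0 ∨ x k = 1) :
    (∃! z : Fin (Nat.size n) → ℝ,
        ∀ q, q < Nat.size n →
          bitGadget n q x (fun i => if h : i < Nat.size n then z ⟨i, h⟩ else 0) ∈
            truncParityPolytope (n + 2 ^ (q + 1)) q) ∧
    ∀ z : Fin (Nat.size n) → ℝ,
      (∀ q, q < Nat.size n →
          bitGadget n q x (fun i => if h : i < Nat.size n then z ⟨i, h⟩ else 0) ∈
            truncParityPolytope (n + 2 ^ (q + 1)) q) →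
      (∀ k, z k = 0 ∨ z k = 1) ∧
      (∑ k, x k) = ∑ k : Fin (Nat.size n), (1 - z k) * 2 ^ (k : ℕ) := by
  classical
  set m := Nat.size n with hm
  obtain ⟨s, hs, hsn⟩ : ∃ s : ℕ, (∑ k, x k) = (s : ℝ) ∧ s ≤ n := by
    refine ⟨∑ k : Fin n, (if x k = 1 then 1 else 0), ?_, ?_⟩
    · push_cast
      refine Finset.sum_congr rfl fun k _ => ?_
      rcases hx k with h | h <;> simp [h]
    · calc (∑ k : Fin n, if x k = 1 then 1 else 0) ≤ ∑ _k : Fin n, 1 :=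
            Finset.sum_le_sum fun k _ => by split <;> omega
        _ = n := by simp
  have hsm : s < 2 ^ m := lt_of_le_of_lt hsn (Nat.lt_size_self n)
  -- evaluation of the z-region sum
  have region_eval : ∀ (q : ℕ) (zf : ℕ → ℝ),
      (∀ k, k < q → zf k = if s.testBit k then 0 else 1) →
      ∑ p ∈ Finset.range (2 ^ q - 1), zf (Nat.size (p + 1) - 1)
        = (2 ^ q - 1) - ((s % 2 ^ q : ℕ) : ℝ) := by
    intro q zf hzf
    have h1 : ∑ p ∈ Finset.range (2 ^ q - 1), zf (Nat.size (p + 1) - 1)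
        = ∑ p ∈ Finset.range (2 ^ q - 1),
            (fun k => if s.testBit k then (0:ℝ) else 1) (Nat.size (p + 1) - 1) := by
      refine Finset.sum_congr rfl fun p hp => ?_
      rw [Finset.mem_range] at hp
      have hlt : p + 1 < 2 ^ q := by
        have := Nat.one_le_two_pow (n := q); omega
      have hsz : Nat.size (p + 1) ≤ q := Nat.size_le.mpr hlt
      have hsz1 : 1 ≤ Nat.size (p + 1) := Nat.size_pos.mpr (Nat.succ_pos p)
      exact hzf _ (by omega)
    rw [h1, sum_size_region (fun k => if s.testBit k then (0:ℝ) else 1) q]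
    have h2 : ∀ k ∈ Finset.range q, (2:ℝ) ^ k * (if s.testBit k then (0:ℝ) else 1)
        = 2 ^ k - 2 ^ k * (if s.testBit k then 1 else 0) := by
      intro k _; split <;> ring
    rw [Finset.sum_congr rfl h2, Finset.sum_sub_distrib, sum_testbit, geo_sum]
  -- existence of membership for the correct bits
  have mem_of : ∀ (q : ℕ) (zf : ℕ → ℝ),
      (∀ k, k ≤ q → zf k = if s.testBit k then 0 else 1) →
      (∀ k, zf k = 0 ∨ zf k = 1) →
      bitGadget n q x zf ∈ truncParityPolytope (n + 2 ^ (q + 1)) q := by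
    intro q zf hzf h01
    apply subset_convexHull
    constructor
    · intro k
      rw [bitGadget_eq]
      unfold gadgetNat
      split_ifs with h1 h2 h3
      · exact hx _
      · right; rfl
      · rcases h01 q with h | h
        · right; rw [h]; ring
        · left; rw [h]; ring
      · exact h01 _
    · set t := s / 2 ^ q with ht
      have hp1 : 1 ≤ 2 ^ q := Nat.one_le_two_pow
      have hdm : 2 ^ q * t + s % 2 ^ q = s := Nat.div_add_mod s (2 ^ q)
      have hsr : (s : ℝ) = 2 ^ q * (t : ℝ) + ((s % 2 ^ q : ℕ) : ℝ) := by
        exact_mod_cast hdm.symm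
      by_cases hb : s.testBit q
      · refine ⟨(2 ^ q - 1) + 2 ^ q * (t + 1) + 1, ?_, ?_⟩
        · rw [gadget_sum, hs, region_eval q zf (fun k hk => hzf k hk.le), hzf q le_rfl,
            hsr, if_pos hb]
          push_cast [Nat.cast_sub hp1]
          ring
        · have h8 : 2 ^ q * (t + 2) = 2 ^ q * (t + 1) + 2 ^ q := by ring
          have h7 : (2 ^ q - 1) + 2 ^ q * (t + 1) + 1 = 2 ^ q * (t + 2) := by omega
          rw [h7, Nat.mul_div_cancel_left _ (by positivity)]
          have h9 : t % 2 = 1 := by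
            have hb' := hb; rw [Nat.testBit_eq_decide_div_mod_eq] at hb'
            simpa [← ht] using hb'
          exact Nat.odd_iff.mpr (by omega)
      · refine ⟨(2 ^ q - 1) + 2 ^ q * (t + 1), ?_, ?_⟩
        · rw [gadget_sum, hs, region_eval q zf (fun k hk => hzf k hk.le), hzf q le_rfl,
            hsr, if_neg hb]
          push_cast [Nat.cast_sub hp1]
          ring
        · rw [div_R]
          have h9 : t % 2 = 0 := by
            have hb' := hb; rw [Nat.testBit_eq_decide_div_mod_eq] at hb'
            simp only [← ht] at hb'
            simpa using hb'
          exact Nat.odd_iff.mpr (by omega)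
  -- membership forces the next bit
  have force : ∀ (q : ℕ) (zf : ℕ → ℝ),
      (∀ k, k < q → zf k = if s.testBit k then 0 else 1) →
      bitGadget n q x zf ∈ truncParityPolytope (n + 2 ^ (q + 1)) q →
      zf q = if s.testBit q then 0 else 1 := by
    intro q zf hzf hmem
    have hp1 : 1 ≤ 2 ^ q := Nat.one_le_two_pow
    have hps : 2 ^ (q + 1) = 2 ^ q + 2 ^ q := by rw [pow_succ]; omega
    obtain ⟨t, ht⟩ : ∃ t, t = s / 2 ^ q := ⟨_, rfl⟩
    have hdm : 2 ^ q * t + s % 2 ^ q = s := by rw [ht]; exact Nat.div_add_mod s (2 ^ q)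
    have hsr : (s : ℝ) = 2 ^ q * (t : ℝ) + ((s % 2 ^ q : ℕ) : ℝ) := by
      exact_mod_cast hdm.symm
    set p := bitGadget n q x zf with hpdef
    have hL' : n + 2 ^ (q + 1) - 1 < n + 2 ^ (q + 1) := by omega
    set L : Fin (n + 2 ^ (q + 1)) := ⟨n + 2 ^ (q + 1) - 1, hL'⟩ with hLdef
    have hLval : (L : ℕ) = n + 2 ^ (q + 1) - 1 := rfl
    have hpL : p L = 1 - zf q := by
      rw [hpdef, bitGadget_eq]
      have c1 : ¬ (n + 2 ^ (q + 1) - 1 < n) := by omega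
      have c2 : ¬ (n + 2 ^ (q + 1) - 1 < n + 2 ^ q) := by omega
      simp [gadgetNat, hLval, c1, c2]
    have hbox := pp_box hmem L
    have hp01 : ∀ j : Fin (n + 2 ^ (q + 1)), (j : ℕ) ≠ n + 2 ^ (q + 1) - 1 →
        p j = 0 ∨ p j = 1 := by
      intro j hj
      rw [hpdef, bitGadget_eq]
      have hjlt : (j : ℕ) < n + 2 ^ (q + 1) := j.isLt
      unfold gadgetNat
      by_cases h1 : (j:ℕ) < n
      · rw [dif_pos h1]; exact hx _
      · rw [dif_neg h1]
        by_cases h2 : (j:ℕ) < n + 2 ^ q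
        · rw [if_pos h2]; right; rfl
        · rw [if_neg h2]
          rw [if_neg hj]
          have hidx : Nat.size ((j:ℕ) - (n + 2 ^ q) + 1) - 1 < q := by
            have h4 : (j:ℕ) - (n + 2 ^ q) + 1 < 2 ^ q := by omega
            have h5 := Nat.size_le.mpr h4
            have h6 : 0 < Nat.size ((j:ℕ) - (n + 2 ^ q) + 1) :=
              Nat.size_pos.mpr (Nat.succ_pos _)
            omega
          rw [hzf _ hidx]
          by_cases hb : s.testBit (Nat.size ((j:ℕ) - (n + 2 ^ q) + 1) - 1)
          · rw [if_pos hb]; left; rfl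
          · rw [if_neg hb]; right; rfl
    set w : Fin (n + 2 ^ (q + 1)) → ℝ :=
      fun j => if (j : ℕ) = n + 2 ^ (q + 1) - 1 then (if s.testBit q then 0 else 1)
        else p j with hw
    have hwL : w L = if s.testBit q then 0 else 1 := by
      simp only [hw, hLval, if_pos rfl, ↓reduceIte]
    have hw01 : ∀ j, w j = 0 ∨ w j = 1 := by
      intro j
      simp only [hw]
      by_cases h1 : (j:ℕ) = n + 2 ^ (q + 1) - 1
      · rw [if_pos h1]
        by_cases hb : s.testBit q
        · rw [if_pos hb]; left; rfl
        · rw [if_neg hb]; right; rfl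
      · rw [if_neg h1]; exact hp01 j h1
    have hsump : ∑ j, p j
        = (s:ℝ) + 2 ^ q + ((2 ^ q - 1) - ((s % 2 ^ q : ℕ):ℝ)) + (1 - zf q) := by
      rw [hpdef, gadget_sum, hs, region_eval q zf hzf]
    obtain ⟨R, hR⟩ : ∃ R, R = (2 ^ q - 1) + 2 ^ q * (t + 1) := ⟨_, rfl⟩
    have hRcast : (R : ℝ) = (∑ j, p j) - p L := by
      rw [hsump, hpL, hsr, hR]
      push_cast [Nat.cast_sub hp1]
      ring
    have key : 1 ≤ ∑ j, (w j + (1 - 2 * w j) * p j) := by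
      refine pp_affine hmem w (fun j => 1 - 2 * w j) ?_
      rintro u hu01 ⟨su, hsu, hodd⟩
      have hnn : ∀ j ∈ Finset.univ, (0:ℝ) ≤ w j + (1 - 2 * w j) * u j := by
        intro j _
        rcases hw01 j with h | h <;> rcases hu01 j with h' | h' <;> rw [h, h'] <;> norm_num
      by_cases hag : ∀ j : Fin (n + 2 ^ (q + 1)), (j : ℕ) ≠ n + 2 ^ (q + 1) - 1 → u j = p j
      · have hsum_u : (su : ℝ) = (∑ j, p j) - p L + u L := by
          rw [← hsu, ← Finset.sum_erase_add Finset.univ u (Finset.mem_univ L),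
            ← Finset.sum_erase_add Finset.univ p (Finset.mem_univ L)]
          have he : ∑ j ∈ Finset.univ.erase L, u j = ∑ j ∈ Finset.univ.erase L, p j := by
            refine Finset.sum_congr rfl fun j hj => hag j ?_
            have hne := Finset.ne_of_mem_erase hj
            exact fun hc => hne (Fin.ext (by rw [hc, hLval]))
          rw [he]; ring
        rcases hu01 L with h0 | h1
        · -- u L = 0, so su = R, forcing testBit q s = false
          have hsuR : su = R := by
            have hc : (su : ℝ) = (R : ℝ) := by rw [hsum_u, h0, hRcast]; ring
            exact_mod_cast hc
          have hdiv : su / 2 ^ q = t + 1 := by rw [hsuR, hR, div_R]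
          rw [hdiv] at hodd
          have h9 : t % 2 = 0 := by
            have := Nat.odd_iff.mp hodd
            omega
          have hb : s.testBit q = false := by
            rw [Nat.testBit_eq_decide_div_mod_eq, ← ht]
            simp [h9]
          have hterm : w L + (1 - 2 * w L) * u L = 1 := by
            rw [hwL, h0, hb]; norm_num
          calc (1:ℝ) = w L + (1 - 2 * w L) * u L := hterm.symm
            _ ≤ ∑ j, (w j + (1 - 2 * w j) * u j) :=
                Finset.single_le_sum hnn (Finset.mem_univ L)
        · -- u L = 1, so su = R + 1, forcing testBit q s = true
          have hsuR : su = R + 1 := by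
            have hc : (su : ℝ) = (R : ℝ) + 1 := by rw [hsum_u, h1, hRcast]
            exact_mod_cast hc
          have h8 : 2 ^ q * (t + 2) = 2 ^ q * (t + 1) + 2 ^ q := by ring
          have h7 : R + 1 = 2 ^ q * (t + 2) := by omega
          have hpos : (0:ℕ) < 2 ^ q := by positivity
          have hdiv : su / 2 ^ q = t + 2 := by
            rw [hsuR, h7, Nat.mul_div_cancel_left _ hpos]
          rw [hdiv] at hodd
          have h9 : t % 2 = 1 := by
            have := Nat.odd_iff.mp hodd
            omega
          have hb : s.testBit q = true := by
            rw [Nat.testBit_eq_decide_div_mod_eq, ← ht]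
            simp [h9]
          have hterm : w L + (1 - 2 * w L) * u L = 1 := by
            rw [hwL, h1, hb]; norm_num
          calc (1:ℝ) = w L + (1 - 2 * w L) * u L := hterm.symm
            _ ≤ ∑ j, (w j + (1 - 2 * w j) * u j) :=
                Finset.single_le_sum hnn (Finset.mem_univ L)
      · push_neg at hag
        obtain ⟨j, hj1, hj2⟩ := hag
        have hwj : w j = p j := by simp only [hw]; rw [if_neg hj1]
        have hterm : (1:ℝ) ≤ w j + (1 - 2 * w j) * u j := by
          rcases hp01 j hj1 with h | h <;> rcases hu01 j with h' | h'
          · exact absurd (h'.trans h.symm) hj2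
          · rw [hwj, h, h']; norm_num
          · rw [hwj, h, h']; norm_num
          · exact absurd (h'.trans h.symm) hj2
        calc (1:ℝ) ≤ w j + (1 - 2 * w j) * u j := hterm
          _ ≤ ∑ i, (w i + (1 - 2 * w i) * u i) :=
              Finset.single_le_sum hnn (Finset.mem_univ j)
    have hterm : ∑ j, (w j + (1 - 2 * w j) * p j) = w L + (1 - 2 * w L) * p L := by
      refine Finset.sum_eq_single_of_mem L (Finset.mem_univ L) ?_
      intro j _ hjL
      have hj : (j : ℕ) ≠ n + 2 ^ (q + 1) - 1 := fun hc => hjL (Fin.ext (by rw [hc, hLval]))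
      have hwj : w j = p j := by simp only [hw]; rw [if_neg hj]
      rcases hp01 j hj with h | h <;> rw [hwj, h] <;> ring
    rw [hterm] at key
    by_cases hb : s.testBit q
    · rw [hwL, if_pos hb] at key
      rw [if_pos hb]
      have h2 := hbox.2
      rw [hpL] at key h2
      linarith
    · rw [hwL, if_neg hb] at key
      rw [if_neg hb]
      have h2 := hbox.1
      rw [hpL] at key h2
      linarith
  -- uniqueness of the solution
  have uniq : ∀ z : Fin m → ℝ,
      (∀ q, q < m →
        bitGadget n q x (fun i => if h : i < m then z ⟨i, h⟩ else 0) ∈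
          truncParityPolytope (n + 2 ^ (q + 1)) q) →
      ∀ q (hq : q < m), z ⟨q, hq⟩ = if s.testBit q then 0 else 1 := by
    intro z hz q
    induction q using Nat.strong_induction_on with
    | _ q ih =>
      intro hq
      have h := force q (fun i => if h : i < m then z ⟨i, h⟩ else 0)
        (fun k hk => by
          simp only [dif_pos (hk.trans hq)]
          exact ih k hk (hk.trans hq))
        (hz q hq)
      simp only [dif_pos hq] at h
      exact h
  have hex : ∀ q, q < m →
      bitGadget n q x
        (fun i => if h : i < m then
          (fun k : Fin m => if s.testBit (k:ℕ) then (0:ℝ) else 1) ⟨i, h⟩ else 0) ∈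
        truncParityPolytope (n + 2 ^ (q + 1)) q := by
    intro q hq
    refine mem_of q _ (fun k hk => ?_) (fun k => ?_)
    · have hkm := lt_of_le_of_lt hk hq
      simp only [dif_pos hkm]
    · by_cases h : k < m
      · by_cases hb : s.testBit k
        · simp only [dif_pos h]; left; simp [hb]
        · simp only [dif_pos h]; right; simp [hb]
      · simp [h]
  constructor
  · refine ⟨fun k : Fin m => if s.testBit (k:ℕ) then (0:ℝ) else 1, hex, ?_⟩
    intro y hy
    funext k
    have h := uniq y hy (k : ℕ) k.isLt
    simpa using h
  · intro z hz
    have hzk : ∀ k : Fin m, z k = if s.testBit (k:ℕ) then 0 else 1 := fun k => by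
      have h := uniq z hz (k : ℕ) k.isLt
      simpa using h
    constructor
    · intro k
      rw [hzk k]
      by_cases hb : s.testBit (k:ℕ)
      · rw [if_pos hb]; left; rfl
      · rw [if_neg hb]; right; rfl
    · rw [hs]
      have h1 : ∀ k ∈ (Finset.univ : Finset (Fin m)), (1 - z k) * 2 ^ (k:ℕ)
          = (fun j => (2:ℝ) ^ j * (if s.testBit j then 1 else 0)) (k:ℕ) := by
        intro k _
        rw [hzk k]
        by_cases hb : s.testBit (k:ℕ)
        · norm_num [hb]
        · norm_num [hb]
      rw [Finset.sum_congr rfl h1,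
        Fin.sum_univ_eq_sum_range (fun j => (2:ℝ) ^ j * (if s.testBit j then 1 else 0)) m,
        sum_testbit, Nat.mod_eq_of_lt hsm]
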